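/- arXiv:2508.03568 — 3 statements merged into one kernel-verified Lean document; each statement's English description precedes it below -/
import Mathlib

section
/- Theorem A (quasi-isometry): if f, g ∈ Λ are both homogeneous of degree d, then ⟨D f, D g⟩ = d · ⟨f, g⟩. -/
open MvPolynomial

/-- The ring of symmetric functions in the power-sum model:
`Λ = ℚ[p₁, p₂, …]` with the variable indexed by `n : ℕ+` being the power sum `pₙ`. -/
abbrev Λ : Type := MvPolynomial ℕ+ ℚ

/-- `Dₙ = n · ∂/∂pₙ`. -/
noncomputable def Dn (n : ℕ+) : Λ →ₗ[ℚ] Λ :=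
  (n : ℚ) • (pderiv n : Derivation ℚ Λ Λ).toLinearMap

/-- `D = Σₙ Dₙ` (on each polynomial only finitely many `Dₙ` are nonzero). -/
noncomputable def D (f : Λ) : Λ := ∑ᶠ n : ℕ+, Dn n f

/-- The weight `|λ| = Σₙ n·(λ n)` of a power-sum monomial exponent. -/
def wt (l : ℕ+ →₀ ℕ) : ℕ := l.sum fun n k => (n : ℕ) * k

/-- `f` is homogeneous of degree `d` if every monomial in its support has weight `d`. -/
def IsHomog (d : ℕ) (f : Λ) : Prop := ∀ l ∈ f.support, wt l = d

/-- `z_λ = Πₙ n^{λ n} · (λ n)!`. -/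
noncomputable def zlam (l : ℕ+ →₀ ℕ) : ℚ :=
  l.prod fun n k => (n : ℚ) ^ k * (Nat.factorial k : ℚ)

/-- The Hall inner product: the unique bilinear form with `⟨p_λ, p_μ⟩ = δ_{λμ} z_λ`. -/
noncomputable def hall (f g : Λ) : ℚ := ∑ l ∈ f.support, f.coeff l * g.coeff l * zlam l

open Finsupp in
lemma sub_apply' (l : ℕ+ →₀ ℕ) (n k : ℕ+) :
    (l - single n 1 : ℕ+ →₀ ℕ) k = l k - (single n 1 : ℕ+ →₀ ℕ) k := by
  simp [Finsupp.tsub_apply]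

open Finsupp in
lemma sub_support (l : ℕ+ →₀ ℕ) (n : ℕ+) :
    (l - single n 1 : ℕ+ →₀ ℕ).support ⊆ l.support := Finsupp.support_tsub

open Finsupp in
lemma wt_sub (l : ℕ+ →₀ ℕ) (n : ℕ+) (hn : n ∈ l.support) :
    wt (l - single n 1) + (n : ℕ) = wt l := by
  have hln : 1 ≤ l n := Nat.one_le_iff_ne_zero.mpr (Finsupp.mem_support_iff.mp hn)
  unfold wt
  rw [Finsupp.sum_of_support_subset _ (sub_support l n) _ (by simp),
    Finsupp.sum, ← Finset.add_sum_erase _ _ hn, ← Finset.add_sum_erase _ _ hn]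
  have h1 : ∀ k ∈ l.support.erase n, (k : ℕ) * (l - single n 1 : ℕ+ →₀ ℕ) k = k * l k := by
    intro k hk
    have : k ≠ n := Finset.ne_of_mem_erase hk
    rw [sub_apply', Finsupp.single_apply, if_neg (Ne.symm this), Nat.sub_zero]
  rw [Finset.sum_congr rfl h1, sub_apply', Finsupp.single_apply, if_pos rfl]
  have h2 : (n : ℕ) * (l n - 1) + n = n * l n := by
    calc (n : ℕ) * (l n - 1) + n = n * ((l n - 1) + 1) := by ring
    _ = n * l n := by rw [Nat.sub_add_cancel hln]
  omega

open Finsupp in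
lemma zlam_sub (l : ℕ+ →₀ ℕ) (n : ℕ+) (hn : n ∈ l.support) :
    zlam l = (n : ℚ) * (l n : ℚ) * zlam (l - single n 1) := by
  have hln : 1 ≤ l n := Nat.one_le_iff_ne_zero.mpr (Finsupp.mem_support_iff.mp hn)
  unfold zlam
  rw [Finsupp.prod_of_support_subset _ (sub_support l n) _ (by simp),
    Finsupp.prod, ← Finset.mul_prod_erase _ _ hn, ← Finset.mul_prod_erase _ _ hn]
  have h1 : ∀ k ∈ l.support.erase n,
      ((k : ℚ) ^ ((l - single n 1 : ℕ+ →₀ ℕ) k) *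
        (Nat.factorial ((l - single n 1 : ℕ+ →₀ ℕ) k) : ℚ))
        = (k : ℚ) ^ (l k) * (Nat.factorial (l k) : ℚ) := by
    intro k hk
    have : k ≠ n := Finset.ne_of_mem_erase hk
    rw [sub_apply', Finsupp.single_apply, if_neg (Ne.symm this), Nat.sub_zero]
  rw [Finset.prod_congr rfl h1, sub_apply', Finsupp.single_apply, if_pos rfl]
  obtain ⟨m, hm⟩ : ∃ m, l n = m + 1 := ⟨l n - 1, by omega⟩
  rw [hm, Nat.add_sub_cancel, pow_succ, Nat.factorial_succ]
  push_cast
  ring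

open Finsupp in
lemma sub_single_inj (l m : ℕ+ →₀ ℕ) (n : ℕ+) (hl : n ∈ l.support) (hm : n ∈ m.support)
    (h : l - single n 1 = m - single n 1) : l = m := by
  ext k
  have hk : (l - single n 1 : ℕ+ →₀ ℕ) k = (m - single n 1 : ℕ+ →₀ ℕ) k := by rw [h]
  rw [sub_apply', sub_apply'] at hk
  have hln : 1 ≤ l n := Nat.one_le_iff_ne_zero.mpr (Finsupp.mem_support_iff.mp hl)
  have hmn : 1 ≤ m n := Nat.one_le_iff_ne_zero.mpr (Finsupp.mem_support_iff.mp hm)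
  rcases eq_or_ne k n with rfl | hne
  · rw [Finsupp.single_apply, if_pos rfl] at hk; omega
  · rw [Finsupp.single_apply, if_neg (Ne.symm hne)] at hk; omega

lemma hall_eq_sum (f g : Λ) (s : Finset (ℕ+ →₀ ℕ)) (hs : f.support ⊆ s) :
    hall f g = ∑ l ∈ s, f.coeff l * g.coeff l * zlam l := by
  unfold hall
  exact Finset.sum_subset hs fun l _ hl => by
    rw [MvPolynomial.notMem_support_iff.mp hl]; ring

lemma hall_add_left (f₁ f₂ g : Λ) : hall (f₁ + f₂) g = hall f₁ g + hall f₂ g := by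
  rw [hall_eq_sum (f₁ + f₂) g (f₁.support ∪ f₂.support) MvPolynomial.support_add,
    hall_eq_sum f₁ g (f₁.support ∪ f₂.support) Finset.subset_union_left,
    hall_eq_sum f₂ g (f₁.support ∪ f₂.support) Finset.subset_union_right,
    ← Finset.sum_add_distrib]
  exact Finset.sum_congr rfl fun l _ => by rw [coeff_add]; ring

lemma hall_zero_left (g : Λ) : hall 0 g = 0 := by simp [hall]

lemma hall_sum_left {ι : Type*} (s : Finset ι) (F : ι → Λ) (g : Λ) :
    hall (∑ i ∈ s, F i) g = ∑ i ∈ s, hall (F i) g := by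
  classical
  induction s using Finset.cons_induction with
  | empty => simp [hall_zero_left]
  | cons i s hi ih => rw [Finset.sum_cons, Finset.sum_cons, hall_add_left, ih]

lemma hall_sum_right {ι : Type*} (s : Finset ι) (F : ι → Λ) (f : Λ) :
    hall f (∑ i ∈ s, F i) = ∑ i ∈ s, hall f (F i) := by
  unfold hall
  rw [Finset.sum_comm]
  refine Finset.sum_congr rfl fun l _ => ?_
  rw [MvPolynomial.coeff_sum, Finset.mul_sum, Finset.sum_mul]

open Finsupp in
lemma hall_monomial (l m : ℕ+ →₀ ℕ) (a b : ℚ) :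
    hall (monomial l a) (monomial m b) = if l = m then a * b * zlam l else 0 := by
  rw [hall_eq_sum _ _ {l} support_monomial_subset, Finset.sum_singleton,
    coeff_monomial, coeff_monomial, if_pos rfl]
  rcases eq_or_ne l m with rfl | h
  · rw [if_pos rfl, if_pos rfl]
  · rw [if_neg (fun hh => h hh.symm), if_neg h]; ring

open Finsupp in
lemma Dn_apply_monomial (n : ℕ+) (l : ℕ+ →₀ ℕ) (c : ℚ) :
    Dn n (monomial l c) = monomial (l - single n 1) (c * (l n) * (n : ℚ)) := by
  unfold Dn
  rw [LinearMap.smul_apply]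
  have h : ((pderiv n : Derivation ℚ Λ Λ).toLinearMap) (monomial l c)
      = pderiv n (monomial l c) := rfl
  rw [h, pderiv_monomial, MvPolynomial.smul_monomial, smul_eq_mul]
  congr 1
  ring

open Finsupp in
lemma D_monomial (l : ℕ+ →₀ ℕ) (c : ℚ) :
    D (monomial l c) = ∑ n ∈ l.support, monomial (l - single n 1) (c * (l n) * (n : ℚ)) := by
  unfold D
  rw [finsum_eq_sum_of_support_subset _ (s := l.support) ?_]
  · exact Finset.sum_congr rfl fun n _ => Dn_apply_monomial n l c
  · intro n hn
    simp only [Function.mem_support, ne_eq] at hn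
    by_contra hc
    apply hn
    rw [Dn_apply_monomial, Finsupp.notMem_support_iff.mp hc]
    simp

lemma D_support_finite (f : Λ) : (Function.support fun n => Dn n f).Finite := by
  apply Set.Finite.subset f.vars.finite_toSet
  intro n hn
  simp only [Function.mem_support, ne_eq] at hn
  by_contra hv
  apply hn
  unfold Dn
  rw [LinearMap.smul_apply]
  have h : ((pderiv n : Derivation ℚ Λ Λ).toLinearMap) f = pderiv n f := rfl
  rw [h, pderiv_eq_zero_of_notMem_vars hv, smul_zero]

lemma D_add (f g : Λ) : D (f + g) = D f + D g := by
  unfold D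
  rw [← finsum_add_distrib (D_support_finite f) (D_support_finite g)]
  exact finsum_congr fun n => map_add _ _ _

lemma D_zero : D (0 : Λ) = 0 := by
  unfold D; simp

lemma D_sum {ι : Type*} (s : Finset ι) (F : ι → Λ) :
    D (∑ i ∈ s, F i) = ∑ i ∈ s, D (F i) := by
  classical
  induction s using Finset.cons_induction with
  | empty => simp [D_zero]
  | cons i s hi ih => rw [Finset.sum_cons, Finset.sum_cons, D_add, ih]

lemma wt_cast (l : ℕ+ →₀ ℕ) :
    ((wt l : ℚ)) = ∑ n ∈ l.support, (n : ℚ) * (l n : ℚ) := by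
  unfold wt
  rw [Finsupp.sum]
  push_cast
  rfl

open Finsupp in
lemma key (d : ℕ) (l m : ℕ+ →₀ ℕ) (hl : wt l = d) (hm : wt m = d) (a b : ℚ) :
    hall (D (monomial l a)) (D (monomial m b)) = (d : ℚ) * hall (monomial l a) (monomial m b) := by
  rw [D_monomial, D_monomial, hall_sum_left]
  simp only [hall_sum_right, hall_monomial]
  rcases eq_or_ne l m with rfl | hne
  · rw [if_pos rfl]
    have hdiag : ∀ n ∈ l.support,
        (∑ n' ∈ l.support, if (l - single n 1 : ℕ+ →₀ ℕ) = l - single n' 1 then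
          (a * (l n) * (n : ℚ)) * (b * (l n') * (n' : ℚ)) * zlam (l - single n 1) else 0)
        = (n : ℚ) * (l n : ℚ) * (a * b * zlam l) := by
      intro n hn
      have hln : 1 ≤ l n := Nat.one_le_iff_ne_zero.mpr (Finsupp.mem_support_iff.mp hn)
      rw [Finset.sum_eq_single_of_mem n hn ?_]
      · rw [if_pos rfl, zlam_sub l n hn]; ring
      · intro n' hn' hne'
        rw [if_neg]
        intro hh
        have h1 : (l - single n 1 : ℕ+ →₀ ℕ) n = (l - single n' 1 : ℕ+ →₀ ℕ) n := by rw [hh]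
        rw [sub_apply', sub_apply', Finsupp.single_apply, Finsupp.single_apply,
          if_pos rfl, if_neg hne'] at h1
        omega
    rw [Finset.sum_congr rfl hdiag, ← Finset.sum_mul, ← wt_cast, hl]
  · rw [if_neg hne, mul_zero]
    refine Finset.sum_eq_zero fun n hn => Finset.sum_eq_zero fun n' hn' => ?_
    rw [if_neg]
    intro hh
    have h1 := wt_sub l n hn
    have h2 := wt_sub m n' hn'
    rw [hh] at h1
    have hnn' : (n : ℕ) = (n' : ℕ) := by omega
    have : n = n' := PNat.coe_injective hnn'
    subst this
    exact hne (sub_single_inj l m n hn hn' hh)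

/-- Theorem A (quasi-isometry): for `f, g` homogeneous of degree `d`,
`⟨D f, D g⟩ = d ⟨f, g⟩`. -/
theorem D_quasi_isometry (d : ℕ) (f g : Λ) (hf : IsHomog d f) (hg : IsHomog d g) :
    hall (D f) (D g) = (d : ℚ) * hall f g := by
  conv_lhs => rw [← support_sum_monomial_coeff f, ← support_sum_monomial_coeff g]
  conv_rhs => rw [← support_sum_monomial_coeff f, ← support_sum_monomial_coeff g]
  rw [D_sum, D_sum, hall_sum_left, hall_sum_left, Finset.mul_sum]
  refine Finset.sum_congr rfl fun l hl => ?_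
  rw [hall_sum_right, hall_sum_right, Finset.mul_sum]
  refine Finset.sum_congr rfl fun m hm => ?_
  exact key d l m (hf l hl) (hg m hm) _ _
end

section
/- For every d > 0, the derivation D acts injectively on the degree-d homogeneous component of Λ: if f ∈ Λ is homogeneous of degree d > 0 and D f = 0, then f = 0. -/
open MvPolynomial

lemma coeff_pderiv' (n : ℕ+) (l : ℕ+ →₀ ℕ) (f : Λ) :
    coeff l (pderiv n f) = ((l n : ℚ) + 1) * coeff (l + Finsupp.single n 1) f := by
  induction f using MvPolynomial.induction_on' with
  | monomial s a =>
    rw [pderiv_monomial, coeff_monomial, coeff_monomial]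
    by_cases hs : s = l + Finsupp.single n 1
    · subst hs
      have h1 : l + Finsupp.single n 1 - Finsupp.single n 1 = l := by
        ext x
        simp [Finsupp.single_apply]
      have h2 : ((l + Finsupp.single n 1 : ℕ+ →₀ ℕ)) n = l n + 1 := by
        rw [Finsupp.add_apply, Finsupp.single_eq_same]
      rw [if_pos h1, if_pos rfl, h2]
      push_cast
      ring
    · rw [if_neg hs]
      by_cases h1 : s - Finsupp.single n 1 = l
      · rw [if_pos h1]
        have hsn : s n = 0 := by
          by_contra hne0
          apply hs
          ext x
          have hx := congrArg (fun g => g x) h1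
          simp only [Finsupp.coe_tsub, Pi.sub_apply, Finsupp.single_apply,
            Finsupp.add_apply] at hx ⊢
          rcases eq_or_ne n x with rfl | hxn
          · simp at hx ⊢
            omega
          · simp [hxn] at hx ⊢
            omega
        simp [hsn]
      · rw [if_neg h1, mul_zero]
  | add p q hp hq =>
    simp only [map_add, coeff_add, hp, hq]
    ring

lemma wt_add (a b : ℕ+ →₀ ℕ) : wt (a + b) = wt a + wt b := by
  unfold wt
  rw [Finsupp.sum_add_index]
  · intro i _; simp
  · intro i _ k1 k2; ring

lemma wt_single (n : ℕ+) (k : ℕ) : wt (Finsupp.single n k) = n * k := by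
  unfold wt
  rw [Finsupp.sum_single_index]
  simp

/-- `D` acts injectively on the degree-`d` homogeneous component for `d > 0`. -/
theorem D_injective_on_homog (d : ℕ) (hd : 0 < d) (f : Λ) (hf : IsHomog d f)
    (h : D f = 0) : f = 0 := by
  by_contra hne
  obtain ⟨m, hm⟩ := (support_nonempty.mpr hne)
  have hwm : wt m = d := hf m hm
  have hmne : m ≠ 0 := by
    rintro rfl
    simp [wt] at hwm
    omega
  obtain ⟨n, hn⟩ := Finsupp.support_nonempty_iff.mpr hmne
  have hmn : 0 < m n := Nat.pos_of_ne_zero (Finsupp.mem_support_iff.mp hn)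
  set l : ℕ+ →₀ ℕ := m - Finsupp.single n 1 with hl
  have hlm : l + Finsupp.single n 1 = m := by
    ext x
    by_cases hx : x = n
    · subst hx; simp [hl]; omega
    · simp [hl, Finsupp.single_apply, Ne.symm hx]
  -- finiteness of support of the family
  have hfin : (Function.support fun n' : ℕ+ => Dn n' f).Finite := by
    apply Set.Finite.subset (f.vars : Finset ℕ+).finite_toSet
    intro n' hn'
    by_contra hv
    apply hn'
    simp only [Dn, LinearMap.smul_apply, Derivation.coeFn_coe]
    rw [pderiv_eq_zero_of_notMem_vars (by simpa using hv)]
    simp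
  have hcoeff : ∑ᶠ n' : ℕ+, coeff l (Dn n' f) = 0 := by
    have hmap := ((lcoeff ℚ l).toAddMonoidHom).map_finsum (f := fun n' : ℕ+ => Dn n' f) hfin
    simp only [LinearMap.toAddMonoidHom_coe, lcoeff_apply] at hmap
    rw [← hmap, ← D, h, coeff_zero]
  have key : ∀ n' : ℕ+, n' ≠ n → coeff l (Dn n' f) = 0 := by
    intro n' hn'
    have hz : coeff (l + Finsupp.single n' 1) f = 0 := by
      by_contra hc
      have := hf _ (mem_support_iff.mpr hc)
      rw [wt_add, wt_single] at this
      have h2 : wt l + (n : ℕ) = d := by rw [← hwm, ← hlm, wt_add, wt_single]; ring_nf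
      have : (n' : ℕ) = (n : ℕ) := by omega
      exact hn' (PNat.coe_injective this)
    simp [Dn, coeff_pderiv', hz]
  rw [finsum_eq_single _ n key] at hcoeff
  have : coeff l (Dn n f) = (n : ℚ) * ((l n : ℚ) + 1) * coeff m f := by
    simp [Dn, coeff_pderiv', hlm, mul_assoc]
  rw [this] at hcoeff
  have hcm : coeff m f ≠ 0 := mem_support_iff.mp hm
  have hnn : ((n : ℕ) : ℚ) ≠ 0 := Nat.cast_ne_zero.mpr n.ne_zero
  have hln : ((l n : ℚ) + 1) ≠ 0 := by positivity
  exact mul_ne_zero (mul_ne_zero (by exact_mod_cast hnn) hln) hcm hcoeff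
end

section
/- Theorem B (chain rule for plethysms): for all f, g ∈ Λ, D_s(f[g]) = (D_s(f)[g]) ∗ D_s(g). -/
open MvPolynomial

/-- `Λ[1^s, 2^s, …]`: the monoid algebra of the multiplicative monoid `ℕ+` over `Λ`,
with elements the finite sums `Σ_k f_k · k^s`, where `k^s · h^s = (kh)^s`. -/
abbrev ΛS : Type := MonoidAlgebra Λ ℕ+

/-- `D_s(f) = Σₙ (Dₙ f) · n^s` (only finitely many terms are nonzero). -/
noncomputable def Ds (f : Λ) : ΛS := ∑ᶠ n : ℕ+, MonoidAlgebra.single n (Dn n f)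

/-- `ψₙ : Λ → Λ`, the ℚ-algebra endomorphism with `ψₙ(p_k) = p_{nk}`;
`pₙ[g] := ψₙ(g)`. -/
noncomputable def psi (n : ℕ+) : Λ →ₐ[ℚ] Λ := aeval fun k : ℕ+ => X (n * k)

/-- Plethysm `f[g]`: the image of `f` under the ℚ-algebra homomorphism `Λ → Λ`
sending `pₙ ↦ ψₙ(g) = pₙ[g]`. -/
noncomputable def pleth (f g : Λ) : Λ := aeval (fun n : ℕ+ => psi n g) f

/-- The star product on `Λ[1^s, 2^s, …]`: the bilinear product determined by
`(f·h^s) ∗ (g·k^s) = (f · p_h[g]) · (hk)^s`. -/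
noncomputable def star (A B : ΛS) : ΛS :=
  ∑ h ∈ A.coeff.support, ∑ k ∈ B.coeff.support,
    MonoidAlgebra.single (h * k) (A.coeff h * psi h (B.coeff k))

/-- Plethysm extended to `Λ[1^s, 2^s, …]` in the first argument:
`(Σ_k f_k·k^s)[g] = Σ_k (f_k[g])·k^s`. -/
noncomputable def plethExt (A : ΛS) (g : Λ) : ΛS :=
  ∑ k ∈ A.coeff.support, MonoidAlgebra.single k (pleth (A.coeff k) g)

/-! ### Auxiliary lemmas -/

lemma Dn_apply' (n : ℕ+) (f : Λ) : Dn n f = (n : ℚ) • pderiv n f := rfl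

lemma Dn_mul (n : ℕ+) (u v : Λ) : Dn n (u * v) = Dn n u * v + u * Dn n v := by
  simp only [Dn_apply', pderiv_mul, smul_add, smul_mul_assoc, mul_smul_comm]

lemma Dn_eq_zero_of_not_mem_vars {n : ℕ+} {f : Λ} (h : n ∉ f.vars) : Dn n f = 0 := by
  simp [Dn_apply', pderiv_eq_zero_of_notMem_vars h]

lemma Ds_apply (f : Λ) (m : ℕ+) : (Ds f).coeff m = Dn m f := by
  classical
  have hsub : (Function.support fun n => MonoidAlgebra.single n (Dn n f) : Set ℕ+)
      ⊆ ↑f.vars := by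
    intro n hn
    simp only [Function.mem_support, ne_eq] at hn
    by_contra hv
    exact hn (by rw [Dn_eq_zero_of_not_mem_vars hv]; simp)
  rw [Ds, finsum_eq_sum_of_support_subset _ hsub, MonoidAlgebra.coeff_sum, Finsupp.finset_sum_apply]
  simp only [MonoidAlgebra.single_apply]
  rw [Finset.sum_ite_eq' f.vars m fun n => Dn n f]
  by_cases hm : m ∈ f.vars
  · simp [hm]
  · simp [hm, Dn_eq_zero_of_not_mem_vars hm]

lemma pleth_zero (g : Λ) : pleth 0 g = 0 := map_zero _

lemma pleth_C (a : ℚ) (g : Λ) : pleth (C a) g = C a := by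
  simp [pleth]

lemma pleth_add (f₁ f₂ g : Λ) : pleth (f₁ + f₂) g = pleth f₁ g + pleth f₂ g := map_add _ _ _

lemma pleth_mul (f₁ f₂ g : Λ) : pleth (f₁ * f₂) g = pleth f₁ g * pleth f₂ g := map_mul _ _ _

lemma pleth_X (n : ℕ+) (g : Λ) : pleth (X n) g = psi n g := aeval_X _ _

/-- The set of pairs `(h, k)` of positive integers with `h * k = m`. -/
noncomputable def antidiag (m : ℕ+) : Finset (ℕ+ × ℕ+) :=
  (Finset.Icc 1 m ×ˢ Finset.Icc 1 m).filter fun p => p.1 * p.2 = m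

lemma mem_antidiag {m : ℕ+} {p : ℕ+ × ℕ+} : p ∈ antidiag m ↔ p.1 * p.2 = m := by
  refine ⟨fun h => (Finset.mem_filter.mp h).2, fun h => ?_⟩
  have h1 : p.1 ≤ m := by
    rw [← h]; exact_mod_cast Nat.le_mul_of_pos_right (p.1 : ℕ) p.2.pos
  have h2 : p.2 ≤ m := by
    rw [← h]; exact_mod_cast Nat.le_mul_of_pos_left (p.2 : ℕ) p.1.pos
  exact Finset.mem_filter.mpr ⟨Finset.mem_product.mpr ⟨Finset.mem_Icc.mpr ⟨p.1.one_le, h1⟩,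
    Finset.mem_Icc.mpr ⟨p.2.one_le, h2⟩⟩, h⟩

lemma plethExt_apply (A : ΛS) (g : Λ) (k : ℕ+) : (plethExt A g).coeff k = pleth (A.coeff k) g := by
  classical
  rw [plethExt, MonoidAlgebra.coeff_sum, Finsupp.finset_sum_apply]
  simp only [MonoidAlgebra.single_apply]
  rw [Finset.sum_ite_eq' A.coeff.support k fun n => pleth (A.coeff n) g]
  by_cases hk : k ∈ A.coeff.support
  · simp [hk]
  · simp [hk, Finsupp.notMem_support_iff.mp hk, pleth_zero]

lemma star_apply (A B : ΛS) (m : ℕ+) :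
    (star A B).coeff m = ∑ p ∈ antidiag m, A.coeff p.1 * psi p.1 (B.coeff p.2) := by
  classical
  have hstar : star A B = ∑ p ∈ A.coeff.support ×ˢ B.coeff.support,
      MonoidAlgebra.single (p.1 * p.2) (A.coeff p.1 * psi p.1 (B.coeff p.2)) := by
    show (∑ h ∈ A.coeff.support, ∑ k ∈ B.coeff.support,
      MonoidAlgebra.single (h * k) (A.coeff h * psi h (B.coeff k))) = _
    rw [Finset.sum_product]
  rw [hstar, MonoidAlgebra.coeff_sum, Finsupp.finset_sum_apply]
  simp only [MonoidAlgebra.single_apply]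
  rw [← Finset.sum_filter]
  refine Finset.sum_subset (fun p hp => mem_antidiag.mpr (Finset.mem_filter.mp hp).2)
    (fun p hp hnp => ?_)
  have hm := mem_antidiag.mp hp
  have hns : p ∉ A.coeff.support ×ˢ B.coeff.support := fun hc => hnp (Finset.mem_filter.mpr ⟨hc, hm⟩)
  rw [Finset.mem_product, not_and_or] at hns
  rcases hns with h | h
  · rw [Finsupp.notMem_support_iff.mp h, zero_mul]
  · rw [Finsupp.notMem_support_iff.mp h, map_zero, mul_zero]

lemma psi_eq_rename (n : ℕ+) (g : Λ) : psi n g = rename (fun k => n * k) g := by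
  show aeval _ g = _
  rw [rename_eq_aeval]
  rfl

lemma Dn_psi (m n : ℕ+) (g : Λ) :
    Dn m (psi n g) =
      ∑ p ∈ antidiag m, (if p.1 = n then C (n : ℚ) * psi n (Dn p.2 g) else 0) := by
  classical
  by_cases hd : n ∣ m
  · obtain ⟨k, rfl⟩ := hd
    have hsum : (∑ p ∈ antidiag (n * k),
        (if p.1 = n then C (n : ℚ) * psi n (Dn p.2 g) else 0))
        = C (n : ℚ) * psi n (Dn k g) := by
      rw [Finset.sum_eq_single_of_mem (n, k) (mem_antidiag.mpr rfl)]
      · exact if_pos rfl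
      · intro q hq hne
        rcases eq_or_ne q.1 n with h1 | h1
        · exfalso
          apply hne
          have hq' := mem_antidiag.mp hq
          rw [h1] at hq'
          exact Prod.ext h1 (mul_left_cancel hq')
        · exact if_neg h1
    rw [hsum]
    have hinj : Function.Injective (fun j : ℕ+ => n * j) := fun a b h => by
      simpa using mul_left_cancel h
    rw [psi_eq_rename, Dn_apply', pderiv_rename hinj k g, Dn_apply', map_smul,
      psi_eq_rename, C_mul', smul_smul]
    congr 1
    push_cast
    ring
  · rw [Finset.sum_eq_zero]
    · rw [psi_eq_rename, Dn_apply']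
      have hv : m ∉ (rename (fun k => n * k) g).vars := by
        intro hm
        obtain ⟨j, _, hjm⟩ := mem_vars_rename _ _ hm
        exact hd ⟨j, hjm.symm⟩
      rw [pderiv_eq_zero_of_notMem_vars hv, smul_zero]
    · intro q hq
      rw [if_neg]
      intro h1
      exact hd ⟨q.2, by rw [← mem_antidiag.mp hq, h1]⟩

lemma Dn_pleth (m : ℕ+) (f g : Λ) :
    Dn m (pleth f g) = ∑ p ∈ antidiag m, pleth (Dn p.1 f) g * psi p.1 (Dn p.2 g) := by
  classical
  induction f using MvPolynomial.induction_on with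
  | C a =>
      rw [pleth_C, Finset.sum_eq_zero]
      · simp [Dn_apply', pderiv_C]
      · intro q hq
        have : Dn q.1 (C a : Λ) = 0 := by simp [Dn_apply', pderiv_C]
        rw [this, pleth_zero, zero_mul]
  | add p q hp hq =>
      rw [pleth_add, map_add, hp, hq, ← Finset.sum_add_distrib]
      refine Finset.sum_congr rfl fun r _ => ?_
      rw [map_add, pleth_add, add_mul]
  | mul_X p n hp =>
      rw [pleth_mul, pleth_X, Dn_mul, hp, Dn_psi m n g, Finset.sum_mul, Finset.mul_sum,
        ← Finset.sum_add_distrib]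
      refine Finset.sum_congr rfl fun q hq => ?_
      rw [Dn_mul, pleth_add, pleth_mul, pleth_mul, pleth_X, add_mul]
      congr 1
      · ring
      · rcases eq_or_ne q.1 n with h | h
        · subst h
          rw [if_pos rfl]
          have hX : Dn q.1 (X q.1 : Λ) = C ((q.1 : ℕ+) : ℚ) := by
            rw [Dn_apply', pderiv_X_self, ← C_mul', mul_one]
          rw [hX, pleth_C]
          ring
        · rw [if_neg h]
          have hX : Dn q.1 (X n : Λ) = 0 := by
            rw [Dn_apply', pderiv_X_of_ne (Ne.symm h), smul_zero]
          rw [hX, pleth_zero]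
          ring

/-- Theorem B (chain rule for plethysms): `D_s(f[g]) = (D_s(f)[g]) ∗ D_s(g)`. -/
theorem Ds_pleth (f g : Λ) :
    Ds (pleth f g) = star (plethExt (Ds f) g) (Ds g) := by
  refine MonoidAlgebra.ext (Finsupp.ext fun m => ?_)
  rw [Ds_apply, star_apply, Dn_pleth]
  refine Finset.sum_congr rfl fun p _ => ?_
  rw [plethExt_apply, Ds_apply, Ds_apply]
end
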